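/- Let a, b : ℝ → ℝ be continuous, nonnegative, ω-periodic (ω > 1), with ∫₀^ω (b(t) - a(t)) dt > 0 and b(t+1) - a(t) ≥ 0 for all t. Then every solution x of x'(t) = -a(t)x(t) + b(t)x(t-1) with continuous initial data x₀ = φ on [-1,0], φ ≥ 0, φ not identically zero on [-1,0] with φ(0) > 0, satisfies x(t) > 0 for all t ≥ 0. -/

import Mathlib

theorem stmt_8 (ω : ℝ) (hω : 1 < ω) (a b : ℝ → ℝ)
    (ha : Continuous a) (hb : Continuous b)
    (hapos : ∀ t, 0 ≤ a t) (hbpos : ∀ t, 0 ≤ b t)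
    (haper : Function.Periodic a ω) (hbper : Function.Periodic b ω)
    (hr : 0 < ∫ t in (0:ℝ)..ω, b t - a t)
    (hsign : ∀ t, 0 ≤ b (t + 1) - a t)
    (x φ : ℝ → ℝ)
    (hxc : ContinuousOn x (Set.Ici (-1 : ℝ)))
    (hode : ∀ t > (0:ℝ), HasDerivAt x (-a t * x t + b t * x (t - 1)) t)
    (hinit : ∀ t ∈ Set.Icc (-1 : ℝ) 0, x t = φ t)
    (hφnn : ∀ t ∈ Set.Icc (-1 : ℝ) 0, 0 ≤ φ t)
    (hφ0 : 0 < φ 0) :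
    ∀ t ≥ (0:ℝ), 0 < x t := by
  set I : ℝ → ℝ := fun t => ∫ s in (0:ℝ)..t, a s with hI
  have hIder : ∀ t : ℝ, HasDerivAt I (a t) t := by
    intro t
    exact intervalIntegral.integral_hasDerivAt_right
      (ha.intervalIntegrable 0 t) (ha.stronglyMeasurableAtFilter _ _) ha.continuousAt
  have hIcont : Continuous I := by
    rw [continuous_iff_continuousAt]; exact fun t => (hIder t).continuousAt
  set y : ℝ → ℝ := fun t => x t * Real.exp (I t) with hy
  have hy0 : y 0 = x 0 := by
    simp [hy, hI]
  have hx0 : x 0 = φ 0 := hinit 0 (by norm_num)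
  -- key induction
  have key : ∀ n : ℕ, ∀ t ∈ Set.Icc (0:ℝ) (n:ℝ), y 0 ≤ y t := by
    intro n
    induction n with
    | zero =>
      intro t ht
      simp only [Nat.cast_zero] at ht
      have : t = 0 := le_antisymm ht.2 ht.1
      simp [this]
    | succ n ih =>
      -- nonnegativity of x on [-1, n]
      have hxnn : ∀ s ∈ Set.Icc (-1:ℝ) (n:ℝ), 0 ≤ x s := by
        intro s hs
        rcases le_or_gt s 0 with h0 | h0
        · rw [hinit s ⟨hs.1, h0⟩]; exact hφnn s ⟨hs.1, h0⟩
        · have hys : y 0 ≤ y s := ih s ⟨h0.le, hs.2⟩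
          have : (0:ℝ) < y s := lt_of_lt_of_le (by rw [hy0, hx0]; exact hφ0) hys
          have he := Real.exp_pos (I s)
          simp only [hy] at this
          nlinarith [this]
      -- monotonicity of y on [0, n+1]
      have hmono : MonotoneOn y (Set.Icc (0:ℝ) ((n:ℝ)+1)) := by
        have hyc : ContinuousOn y (Set.Icc (0:ℝ) ((n:ℝ)+1)) := by
          apply ContinuousOn.mul
          · exact hxc.mono (fun s hs => le_trans (by norm_num) hs.1)
          · exact ((Real.continuous_exp.comp hIcont).continuousOn)
        have hyd : ∀ t ∈ Set.Ioo (0:ℝ) ((n:ℝ)+1),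
            HasDerivAt y (b t * x (t-1) * Real.exp (I t)) t := by
          intro t ht
          have h1 : HasDerivAt x (-a t * x t + b t * x (t - 1)) t := hode t ht.1
          have h2 : HasDerivAt (fun s => Real.exp (I s)) (Real.exp (I t) * a t) t :=
            (Real.hasDerivAt_exp (I t)).comp t (hIder t)
          have : HasDerivAt (fun s => x s * Real.exp (I s)) _ t := h1.mul h2
          convert this using 1
          ring
        apply monotoneOn_of_deriv_nonneg (convex_Icc _ _) hyc
        · intro t ht
          rw [interior_Icc] at ht
          exact (hyd t ht).differentiableAt.differentiableWithinAt
        · intro t ht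
          rw [interior_Icc] at ht
          rw [(hyd t ht).deriv]
          have hx1 : 0 ≤ x (t - 1) := hxnn (t-1) ⟨by linarith [ht.1], by linarith [ht.2]⟩
          exact mul_nonneg (mul_nonneg (hbpos t) hx1) (Real.exp_pos _).le
      intro t ht
      push_cast at ht
      exact hmono (by constructor <;> positivity) ⟨ht.1, ht.2⟩ ht.1
  intro t ht
  obtain ⟨n, hn⟩ : ∃ n : ℕ, t ≤ (n:ℝ) := exists_nat_ge t
  have hyt : y 0 ≤ y t := key n t ⟨ht, hn⟩
  have : (0:ℝ) < y t := lt_of_lt_of_le (by rw [hy0, hx0]; exact hφ0) hyt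
  have he := Real.exp_pos (I t)
  simp only [hy] at this
  nlinarith [this]
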